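/- Let 0≤n≤N be integers and 0≤x≤N. Then the q-Hahn polynomial has the basic hypergeometric expression Q_n(x;α,β,N|q) = q^{−nN+n²/2} · ((q;q)_N/(q;q)_{N−n}) · ∑_{k=0}^{n} ((q^{−n};q)_k (αβq^{n+1};q)_k (q^{−x};q)_k)/((αq;q)_k (q^{−N};q)_k (q;q)_k) · q^k, where q^{−nN+n²/2} denotes the real power of q. -/

import Mathlib

open Finset

noncomputable section

/-- q-shifted factorial `(a;q)_m`. -/
def qPoch (q a : ℝ) (m : ℕ) : ℝ := ∏ k ∈ Finset.range m, (1 - a * q ^ k)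

/-- Two-variable raising operator `R_M : V_{2,M} → V_{2,M+1}` (on functions of `x = x₁`). -/
def R2 (q : ℝ) (M : ℕ) (g : ℕ → ℂ) : ℕ → ℂ := fun x =>
  (q : ℂ) ^ (-(M : ℤ) - 1) * (1 - (q : ℂ) ^ x) * g (x - 1) +
    (q : ℂ) ^ ((x : ℤ) - M - 1) * (1 - (q : ℂ) ^ ((M : ℤ) + 1 - x)) * g x

/-- `R2Iter q n k g = R_{n+k-1} ⋯ R_{n+1} R_n g`. -/
def R2Iter (q : ℝ) (n : ℕ) : ℕ → (ℕ → ℂ) → (ℕ → ℂ)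
  | 0, g => g
  | k + 1, g => R2 q (n + k) (R2Iter q n k g)

/-- The function `φ_n(x) = q^{-n²/2}(q;q)_n (abq^{n+1})^x (b⁻¹q^{-n};q)_x / (aq;q)_x`. -/
def phiH (q a b : ℝ) (n : ℕ) : ℕ → ℂ := fun x =>
  ((q ^ (-((n : ℝ) ^ 2) / 2) * qPoch q q n * (a * b * q ^ (n + 1)) ^ x *
      qPoch q (b⁻¹ * q ^ (-(n : ℤ))) x / qPoch q (a * q) x : ℝ) : ℂ)

/-- The one-dimensional q-Hahn polynomial `Q_n(x; a, b, N | q)`. -/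
def qHahnQ (q a b : ℝ) (n N : ℕ) : ℕ → ℂ := fun x =>
  ((q : ℂ) ^ ((N - n) * (N - n + 1) / 2) / ((qPoch q q (N - n) : ℝ) : ℂ)) *
    R2Iter q n (N - n) (phiH q a b n) x

lemma qPoch_zero (q a : ℝ) : qPoch q a 0 = 1 := by simp [qPoch]

lemma qPoch_succ (q a : ℝ) (k : ℕ) : qPoch q a (k+1) = qPoch q a k * (1 - a * q ^ k) :=
  Finset.prod_range_succ _ _

lemma qPoch_shift (q a : ℝ) (k : ℕ) : qPoch q a (k+1) = (1 - a) * qPoch q (a*q) k := by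
  rw [qPoch, Finset.prod_range_succ']
  simp only [pow_zero, mul_one]
  rw [mul_comm, qPoch]
  congr 1
  refine Finset.prod_congr rfl fun i _ => ?_
  rw [pow_succ]
  ring

lemma poch_split (q : ℝ) (hq : q ≠ 0) (u : ℝ) (k : ℕ) :
    qPoch q (u/q) (k+1) = (1 - u/q) * qPoch q u k := by
  rw [qPoch, Finset.prod_range_succ']
  simp only [pow_zero, mul_one]
  rw [mul_comm, qPoch]
  congr 1
  refine Finset.prod_congr rfl fun i _ => ?_
  rw [pow_succ]
  field_simp

lemma keyA (q v : ℝ) (x : ℕ) (hv : q ^ x * v = 1) :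
    ∀ k : ℕ, (1 - q ^ x) * qPoch q (q * v) k = (q ^ k - q ^ x) * qPoch q v k := by
  intro k
  induction k with
  | zero => simp [qPoch]
  | succ k ih =>
    rw [qPoch_succ, qPoch_succ]
    linear_combination (1 - q*v*q^k) * ih + qPoch q v k * (q^(k+1) - q^k) * hv

lemma fac_neg_ne (q : ℝ) (hq0 : 0 < q) (hq1 : q < 1) {j M : ℕ} (hj : j < M) :
    1 - (q:ℝ)^(-(M:ℤ)) * q ^ j ≠ 0 := by
  have h1 : (0:ℝ) < q ^ M := pow_pos hq0 M
  have h2 : q ^ M < q ^ j := pow_lt_pow_right_of_lt_one₀ hq0 hq1 hj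
  rw [zpow_neg, zpow_natCast]
  have h3 : 1 < (q ^ M)⁻¹ * q ^ j := by
    rw [inv_mul_eq_div]; exact (one_lt_div h1).2 h2
  intro h; linarith [h3]

lemma qPoch_negM_ne (q : ℝ) (hq0 : 0 < q) (hq1 : q < 1) (M k : ℕ) (hk : k ≤ M) :
    qPoch q ((q:ℝ)^(-(M:ℤ))) k ≠ 0 := by
  rw [qPoch]
  exact Finset.prod_ne_zero_iff.2 fun j hj =>
    fac_neg_ne q hq0 hq1 (lt_of_lt_of_le (Finset.mem_range.1 hj) hk)

lemma qPoch_q_ne (q : ℝ) (hq0 : 0 < q) (hq1 : q < 1) (k : ℕ) : qPoch q q k ≠ 0 := by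
  rw [qPoch]
  refine Finset.prod_ne_zero_iff.2 fun j _ => ?_
  have h1 : q * q ^ j ≤ q * 1 := by
    have := pow_le_one₀ (le_of_lt hq0) (le_of_lt hq1) (n := j)
    nlinarith
  have : q * q ^ j < 1 := by nlinarith
  intro h; linarith

lemma qPoch_aq_ne (q a : ℝ) (n k : ℕ) (hk : k ≤ n)
    (hA : ∀ j : ℕ, 1 ≤ j → j ≤ n → 1 - a * q ^ j ≠ 0) : qPoch q (a*q) k ≠ 0 := by
  rw [qPoch]
  refine Finset.prod_ne_zero_iff.2 fun j hj => ?_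
  have hj' : j < k := Finset.mem_range.1 hj
  have : 1 - a * q ^ (j+1) ≠ 0 := hA (j+1) (by omega) (by omega)
  intro h; apply this
  rw [← h, pow_succ]; ring

lemma qPoch_invx_zero (q : ℝ) (hq : q ≠ 0) (x k : ℕ) (hxk : x < k) :
    qPoch q (((q:ℝ)^x)⁻¹) k = 0 := by
  rw [qPoch]
  refine Finset.prod_eq_zero (Finset.mem_range.2 hxk) ?_
  field_simp
  simp

lemma qPoch_negx_zero (q : ℝ) (hq : q ≠ 0) (x k : ℕ) (hxk : x < k) :
    qPoch q ((q:ℝ)^(-(x:ℤ))) k = 0 := by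
  rw [zpow_neg, zpow_natCast]; exact qPoch_invx_zero q hq x k hxk

lemma qvdm (q : ℝ) (hq0 : 0 < q) (hq1 : q < 1) :
    ∀ x : ℕ, ∀ C E : ℝ, (∀ j, j < x → 1 - C*E*q^j ≠ 0) →
    ∑ k ∈ Finset.range (x+1),
      qPoch q C k * qPoch q (((q:ℝ)^x)⁻¹) k / (qPoch q (C*E) k * qPoch q q k) * q ^ k
      = C ^ x * qPoch q E x / qPoch q (C*E) x := by
  intro x
  induction x with
  | zero => intro C E h; simp [qPoch]
  | succ x ih =>
    intro C E h
    have hq : q ≠ 0 := ne_of_gt hq0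
    have hqx : (q:ℝ)^x ≠ 0 := pow_ne_zero _ hq
    have hD : ∀ j : ℕ, j ≤ x → 1 - C*E*q^j ≠ 0 := fun j hj => h j (by omega)
    have hD0 : 1 - C*E ≠ 0 := by have := hD 0 (by omega); simpa using this
    have hDx : qPoch q (C*E) x ≠ 0 := by
      rw [qPoch]
      refine Finset.prod_ne_zero_iff.2 fun j hj => hD j ?_
      have := Finset.mem_range.1 hj; omega
    have hDq : ∀ m : ℕ, m ≤ x → qPoch q (C*q*E) m ≠ 0 := by
      intro m hm
      rw [qPoch]
      refine Finset.prod_ne_zero_iff.2 fun j hj => ?_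
      have hj' : j < m := Finset.mem_range.1 hj
      have h1 := hD (j+1) (by omega)
      intro hc; apply h1
      rw [← hc, pow_succ]; ring
    have harg : ((q:ℝ)^(x+1))⁻¹ = ((q:ℝ)^x)⁻¹ / q := by
      rw [pow_succ, mul_inv, div_eq_mul_inv]
    have hsplit : ∀ j : ℕ, qPoch q (((q:ℝ)^(x+1))⁻¹) (j+1)
        = qPoch q (((q:ℝ)^x)⁻¹) (j+1)
          + (((q:ℝ)^x)⁻¹/q) * (q^(j+1) - 1) * qPoch q (((q:ℝ)^x)⁻¹) j := by
      intro j
      rw [harg, poch_split q hq _ j, qPoch_succ]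
      field_simp
      ring
    have perj : ∀ j ∈ Finset.range (x+1),
        qPoch q C (j+1) * qPoch q (((q:ℝ)^(x+1))⁻¹) (j+1)
            / (qPoch q (C*E) (j+1) * qPoch q q (j+1)) * q^(j+1)
        = (qPoch q C (j+1) * qPoch q (((q:ℝ)^x)⁻¹) (j+1)
            / (qPoch q (C*E) (j+1) * qPoch q q (j+1)) * q^(j+1))
          + (-(1-C)/(1-C*E) * ((q:ℝ)^x)⁻¹
              * (qPoch q (C*q) j * qPoch q (((q:ℝ)^x)⁻¹) j
                  / (qPoch q (C*q*E) j * qPoch q q j) * q^j)) := by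
      intro j hj
      have hj' : j < x + 1 := Finset.mem_range.1 hj
      rw [hsplit j, qPoch_shift q C j, qPoch_shift q (C*E) j, qPoch_succ q q j,
        show C*E*q = C*q*E by ring]
      have hq1' : (1:ℝ) - q * q^j ≠ 0 := by
        have h1 : q ^ j ≤ 1 := pow_le_one₀ (le_of_lt hq0) (le_of_lt hq1)
        have : q * q ^ j < 1 := by nlinarith
        intro hcon; linarith
      have hPd : qPoch q (C*q*E) j ≠ 0 := hDq j (by omega)
      have hPq : qPoch q q j ≠ 0 := qPoch_q_ne q hq0 hq1 j
      field_simp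
      ring
    have hD' : ∀ j, j < x → 1 - C*E*q^j ≠ 0 := fun j hj => hD j (by omega)
    have hD'' : ∀ j, j < x → 1 - C*q*E*q^j ≠ 0 := by
      intro j hj
      have h1 := hD (j+1) (by omega)
      intro hc; apply h1; rw [← hc, pow_succ]; ring
    have e1 := Finset.sum_range_succ' (fun k => qPoch q C k * qPoch q (((q:ℝ)^x)⁻¹) k
        / (qPoch q (C*E) k * qPoch q q k) * q^k) (x+1)
    have e2 := Finset.sum_range_succ (fun k => qPoch q C k * qPoch q (((q:ℝ)^x)⁻¹) k
        / (qPoch q (C*E) k * qPoch q q k) * q^k) (x+1)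
    simp only [qPoch_invx_zero q hq x (x+1) (by omega), mul_zero, zero_mul, zero_div,
      add_zero, pow_zero, mul_one, qPoch_zero, one_mul, div_one] at e1 e2
    rw [Finset.sum_range_succ']
    rw [Finset.sum_congr rfl perj, Finset.sum_add_distrib]
    have hE1 : ∑ j ∈ Finset.range (x+1), (qPoch q C (j+1) * qPoch q (((q:ℝ)^x)⁻¹) (j+1)
        / (qPoch q (C*E) (j+1) * qPoch q q (j+1)) * q^(j+1))
        = C ^ x * qPoch q E x / qPoch q (C*E) x - 1 := by
      rw [← ih C E hD']
      rw [e2] at e1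
      linarith [e1]
    have hE2 : ∑ j ∈ Finset.range (x+1), (-(1-C)/(1-C*E) * ((q:ℝ)^x)⁻¹
              * (qPoch q (C*q) j * qPoch q (((q:ℝ)^x)⁻¹) j
                  / (qPoch q (C*q*E) j * qPoch q q j) * q^j))
        = -(1-C)/(1-C*E) * ((q:ℝ)^x)⁻¹ * ((C*q) ^ x * qPoch q E x / qPoch q (C*q*E) x) := by
      rw [← Finset.mul_sum, ih (C*q) E hD'']
    rw [hE1, hE2]
    have h12 : (1-C*E) * qPoch q (C*q*E) x = qPoch q (C*E) x * (1 - C*E*q^x) := by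
      rw [show C*q*E = C*E*q by ring, ← qPoch_shift, qPoch_succ]
    have hDQ : qPoch q (C*q*E) x ≠ 0 := hDq x le_rfl
    rw [qPoch_succ q E x, qPoch_shift q (C*E) x, show C*E*q = C*q*E by ring]
    simp only [qPoch_zero, pow_zero, one_mul, mul_one, div_one]
    generalize qPoch q (C*q*E) x = P at h12 hDQ ⊢
    field_simp
    linear_combination (C^x * qPoch q E x * q^x) * h12

lemma step_term (q : ℝ) (hq0 : 0 < q) (hq1 : q < 1) (x k M : ℕ) (hkM : k ≤ M) :
    (1 - q^x) * qPoch q ((q:ℝ)^(-((x-1:ℕ):ℤ))) k / qPoch q ((q:ℝ)^(-(M:ℤ))) k +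
      (q^x - q^(M+1)) * qPoch q ((q:ℝ)^(-(x:ℤ))) k / qPoch q ((q:ℝ)^(-(M:ℤ))) k =
    (1 - q^(M+1)) * qPoch q ((q:ℝ)^(-(x:ℤ))) k / qPoch q ((q:ℝ)^(-((M+1:ℕ):ℤ))) k := by
  have hq : q ≠ 0 := ne_of_gt hq0
  have hDM : qPoch q ((q:ℝ)^(-(M:ℤ))) k ≠ 0 := qPoch_negM_ne q hq0 hq1 M k hkM
  have hDM1 : qPoch q ((q:ℝ)^(-((M+1:ℕ):ℤ))) k ≠ 0 := qPoch_negM_ne q hq0 hq1 (M+1) k (by omega)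
  have hargM : q * (q:ℝ)^(-((M+1:ℕ):ℤ)) = (q:ℝ)^(-(M:ℤ)) := by
    rw [zpow_neg, zpow_neg, zpow_natCast, zpow_natCast, pow_succ, mul_inv]
    field_simp
  have hvM : q^(M+1) * (q:ℝ)^(-((M+1:ℕ):ℤ)) = 1 := by
    rw [zpow_neg, zpow_natCast]
    exact mul_inv_cancel₀ (pow_ne_zero _ hq)
  have hB : (1 - q^(M+1)) * qPoch q ((q:ℝ)^(-(M:ℤ))) k
      = (q^k - q^(M+1)) * qPoch q ((q:ℝ)^(-((M+1:ℕ):ℤ))) k := by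
    have h := keyA q ((q:ℝ)^(-((M+1:ℕ):ℤ))) (M+1) hvM k
    rwa [hargM] at h
  rcases Nat.eq_zero_or_pos x with rfl | hx
  · rcases Nat.eq_zero_or_pos k with rfl | hk
    · simp [qPoch]
    · have h1 : qPoch q ((q:ℝ)^(-((0:ℕ):ℤ))) k = 0 := by
        rw [show (-((0:ℕ):ℤ)) = 0 by simp, zpow_zero, qPoch]
        exact Finset.prod_eq_zero (Finset.mem_range.2 hk) (by simp)
      rw [h1]
      simp
  · obtain ⟨y, rfl⟩ : ∃ y, x = y + 1 := ⟨x-1, by omega⟩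
    have hargy : q * (q:ℝ)^(-((y+1:ℕ):ℤ)) = (q:ℝ)^(-(((y+1)-1:ℕ):ℤ)) := by
      rw [show ((y+1)-1 : ℕ) = y by omega, zpow_neg, zpow_neg, zpow_natCast, zpow_natCast,
        pow_succ, mul_inv]
      field_simp
    have hvy : q^(y+1) * (q:ℝ)^(-((y+1:ℕ):ℤ)) = 1 := by
      rw [zpow_neg, zpow_natCast]
      exact mul_inv_cancel₀ (pow_ne_zero _ hq)
    have hA : (1 - q^(y+1)) * qPoch q ((q:ℝ)^(-(((y+1)-1:ℕ):ℤ))) k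
        = (q^k - q^(y+1)) * qPoch q ((q:ℝ)^(-((y+1:ℕ):ℤ))) k := by
      have h := keyA q ((q:ℝ)^(-((y+1:ℕ):ℤ))) (y+1) hvy k
      rwa [hargy] at h
    rw [← add_div, div_eq_div_iff hDM hDM1]
    linear_combination qPoch q ((q:ℝ)^(-((M+1:ℕ):ℤ))) k * hA
      - qPoch q ((q:ℝ)^(-((y+1:ℕ):ℤ))) k * hB

def SsumD (q a b : ℝ) (n M x : ℕ) : ℝ :=
  ∑ k ∈ Finset.range (n+1),
    qPoch q ((q:ℝ) ^ (-(n:ℤ))) k * qPoch q (a*b*q^(n+1)) k * qPoch q ((q:ℝ) ^ (-(x:ℤ))) k /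
      (qPoch q (a*q) k * qPoch q ((q:ℝ) ^ (-(M:ℤ))) k * qPoch q q k) * q ^ k

def GG (q a b : ℝ) (n m x : ℕ) : ℝ :=
  q ^ (-((n:ℝ)^2) / 2 - (n:ℝ)*(m:ℝ) - (m:ℝ)*((m:ℝ)+1)/2) * qPoch q q (n+m) *
    SsumD q a b n (n+m) x

lemma sumstep (q a b : ℝ) (hq0 : 0 < q) (hq1 : q < 1) (n M x : ℕ) (hnM : n ≤ M) :
    (1 - q^x) * SsumD q a b n M (x-1) + (q^x - q^(M+1)) * SsumD q a b n M x
    = (1 - q^(M+1)) * SsumD q a b n (M+1) x := by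
  rw [SsumD, SsumD, SsumD, Finset.mul_sum, Finset.mul_sum, Finset.mul_sum,
    ← Finset.sum_add_distrib]
  refine Finset.sum_congr rfl fun k hk => ?_
  have hkM : k ≤ M := by
    have := Finset.mem_range.1 hk; omega
  have h := step_term q hq0 hq1 x k M hkM
  linear_combination (qPoch q ((q:ℝ)^(-(n:ℤ))) k * qPoch q (a*b*q^(n+1)) k /
    (qPoch q (a*q) k * qPoch q q k) * q^k) * h

lemma RIlem (q a b : ℝ) (hq0 : 0 < q) (hq1 : q < 1) (n m x : ℕ) :
    (q:ℝ)^(-((n+m:ℕ):ℤ) - 1) * (1 - q^x) * GG q a b n m (x-1)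
      + (q:ℝ)^((x:ℤ) - ((n+m:ℕ):ℤ) - 1) * (1 - (q:ℝ)^(((n+m:ℕ):ℤ) + 1 - (x:ℤ))) * GG q a b n m x
    = GG q a b n (m+1) x := by
  have hq : q ≠ 0 := ne_of_gt hq0
  have hcoef : (q:ℝ)^((x:ℤ) - ((n+m:ℕ):ℤ) - 1) * (1 - (q:ℝ)^(((n+m:ℕ):ℤ) + 1 - (x:ℤ)))
      = (q:ℝ)^(-((n+m:ℕ):ℤ)-1) * (q^x - q^((n+m)+1)) := by
    rw [show (x:ℤ) - ((n+m:ℕ):ℤ) - 1 = (x:ℤ) + (-((n+m:ℕ):ℤ)-1) by ring, zpow_add₀ hq,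
      show ((n+m:ℕ):ℤ) + 1 - (x:ℤ) = (((n+m)+1:ℕ):ℤ) + (-(x:ℤ)) by push_cast; ring,
      zpow_add₀ hq, zpow_natCast, zpow_natCast, zpow_neg, zpow_natCast]
    field_simp
  have hE : q ^ (-((n:ℝ)^2)/2 - (n:ℝ)*((m+1:ℕ):ℝ) - ((m+1:ℕ):ℝ)*(((m+1:ℕ):ℝ)+1)/2)
      = q ^ (-((n:ℝ)^2)/2 - (n:ℝ)*(m:ℝ) - (m:ℝ)*((m:ℝ)+1)/2) * (q:ℝ)^(-((n+m:ℕ):ℤ)-1) := by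
    rw [← Real.rpow_intCast q (-((n+m:ℕ):ℤ)-1), ← Real.rpow_add hq0]
    congr 1
    push_cast
    ring
  have hP : qPoch q q ((n+m)+1) = qPoch q q (n+m) * (1 - q^((n+m)+1)) := by
    rw [qPoch_succ, pow_succ]
    ring
  have hs := sumstep q a b hq0 hq1 n (n+m) x (Nat.le_add_right n m)
  rw [hcoef, GG, GG, GG, show n + (m+1) = (n+m) + 1 from rfl, hE, hP]
  linear_combination (q ^ (-((n:ℝ)^2)/2 - (n:ℝ)*(m:ℝ) - (m:ℝ)*((m:ℝ)+1)/2)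
    * (q:ℝ)^(-((n+m:ℕ):ℤ)-1) * qPoch q q (n+m)) * hs

lemma baseGG (q a b : ℝ) (hq0 : 0 < q) (hq1 : q < 1) (ha : 0 < a) (hb : 0 < b)
    (n x : ℕ) (hx : x ≤ n)
    (hA : ∀ j : ℕ, 1 ≤ j → j ≤ n → 1 - a*q^j ≠ 0) :
    GG q a b n 0 x = q ^ (-((n:ℝ)^2) / 2) * qPoch q q n * (a*b*q^(n+1))^x *
      qPoch q (b⁻¹ * q^(-(n:ℤ))) x / qPoch q (a*q) x := by
  have hq : q ≠ 0 := ne_of_gt hq0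
  have hCE : (a*b*q^(n+1)) * (b⁻¹*q^(-(n:ℤ))) = a*q := by
    rw [zpow_neg, zpow_natCast, pow_succ]
    field_simp
  have hx' : ∀ j, j < x → 1 - (a*b*q^(n+1))*(b⁻¹*q^(-(n:ℤ)))*q^j ≠ 0 := by
    intro j hj
    rw [hCE]
    have h1 := hA (j+1) (by omega) (by omega)
    intro hc; apply h1; rw [← hc, pow_succ]; ring
  have hqv := qvdm q hq0 hq1 x (a*b*q^(n+1)) (b⁻¹*q^(-(n:ℤ))) hx'
  rw [hCE] at hqv
  have t2 : SsumD q a b n n x = ∑ k ∈ Finset.range (x+1),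
      qPoch q (a*b*q^(n+1)) k * qPoch q (((q:ℝ)^x)⁻¹) k /
        (qPoch q (a*q) k * qPoch q q k) * q ^ k := by
    rw [SsumD, ← Finset.sum_subset (Finset.range_subset_range.2 (by omega : x+1 ≤ n+1))
      (fun k _ hk' => by
        have hxk : x < k := by
          simp only [Finset.mem_range, not_lt] at hk'; omega
        rw [qPoch_negx_zero q hq x k hxk]
        simp)]
    refine Finset.sum_congr rfl fun k hk => ?_
    have hk' : k ≤ n := by have := Finset.mem_range.1 hk; omega
    have hnz' := qPoch_negM_ne q hq0 hq1 n k hk'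
    have hD1 : qPoch q (a*q) k ≠ 0 := qPoch_aq_ne q a n k hk' hA
    have hD3 : qPoch q q k ≠ 0 := qPoch_q_ne q hq0 hq1 k
    simp only [zpow_neg, zpow_natCast] at hnz' ⊢
    rw [show qPoch q ((q^n:ℝ))⁻¹ k * qPoch q (a*b*q^(n+1)) k * qPoch q (((q:ℝ)^x)⁻¹) k
        = (qPoch q (a*b*q^(n+1)) k * qPoch q (((q:ℝ)^x)⁻¹) k) * qPoch q ((q^n:ℝ))⁻¹ k by ring,
      show qPoch q (a*q) k * qPoch q ((q^n:ℝ))⁻¹ k * qPoch q q k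
        = (qPoch q (a*q) k * qPoch q q k) * qPoch q ((q^n:ℝ))⁻¹ k by ring,
      mul_div_mul_right _ _ hnz']
  rw [GG]
  simp only [Nat.add_zero]
  rw [t2, hqv, show (-((n:ℝ)^2)/2 - (n:ℝ)*((0:ℕ):ℝ) - ((0:ℕ):ℝ)*(((0:ℕ):ℝ)+1)/2)
    = -((n:ℝ)^2)/2 by push_cast; ring]
  ring

lemma mainlem (q a b : ℝ) (hq0 : 0 < q) (hq1 : q < 1) (ha : 0 < a) (hb : 0 < b) (n : ℕ)
    (hA : ∀ j : ℕ, 1 ≤ j → j ≤ n → 1 - a*q^j ≠ 0) :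
    ∀ m x : ℕ, x ≤ n + m →
      R2Iter q n m (phiH q a b n) x = ((GG q a b n m x : ℝ) : ℂ) := by
  intro m
  induction m with
  | zero =>
    intro x hx
    show phiH q a b n x = _
    rw [phiH, baseGG q a b hq0 hq1 ha hb n x (by omega) hA]
  | succ m ih =>
    intro x hx
    show R2 q (n+m) (R2Iter q n m (phiH q a b n)) x = _
    rw [R2]
    rcases Nat.lt_or_ge x (n+m+1) with hlt | hge
    · rw [ih (x-1) (by omega), ih x (by omega), ← RIlem q a b hq0 hq1 n m x]
      push_cast [Complex.ofReal_zpow]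
      ring
    · have hxe : x = n+m+1 := by omega
      subst hxe
      rw [show ((n+m:ℕ):ℤ) + 1 - ((n+m+1:ℕ):ℤ) = 0 by push_cast; ring, zpow_zero]
      simp only [sub_self, mul_zero, zero_mul, add_zero]
      rw [show n+m+1-1 = n+m from rfl, ih (n+m) le_rfl]
      have hri := RIlem q a b hq0 hq1 n m (n+m+1)
      rw [show ((n+m:ℕ):ℤ) + 1 - ((n+m+1:ℕ):ℤ) = 0 by push_cast; ring, zpow_zero] at hri
      simp only [sub_self, mul_zero, zero_mul, add_zero] at hri
      rw [show n+m+1-1 = n+m from rfl] at hri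
      rw [← hri]
      push_cast [Complex.ofReal_zpow]
      ring
theorem stmt12 (q : ℝ) (hq0 : 0 < q) (hq1 : q < 1) (a b : ℝ) (ha : 0 < a) (hb : 0 < b)
    (n N x : ℕ) (hnN : n ≤ N) (hx : x ≤ N)
    (hparam : (a < q⁻¹ ∧ b < q⁻¹) ∨ ((q : ℝ) ^ (-(N : ℤ)) < a ∧ (q : ℝ) ^ (-(N : ℤ)) < b)) :
    qHahnQ q a b n N x =
      ((q ^ ((n : ℝ) ^ 2 / 2 - (n : ℝ) * N) : ℝ) : ℂ) *
        ((qPoch q q N / qPoch q q (N - n) : ℝ) : ℂ) *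
        ∑ k ∈ Finset.range (n + 1),
          ((qPoch q (q ^ (-(n : ℤ))) k * qPoch q (a * b * q ^ (n + 1)) k *
              qPoch q (q ^ (-(x : ℤ))) k /
              (qPoch q (a * q) k * qPoch q (q ^ (-(N : ℤ))) k * qPoch q q k) : ℝ) : ℂ) *
          (q : ℂ) ^ k := by
  obtain ⟨m, rfl⟩ := Nat.exists_eq_add_of_le hnN
  have hq : q ≠ 0 := ne_of_gt hq0
  have hA : ∀ j : ℕ, 1 ≤ j → j ≤ n → 1 - a*q^j ≠ 0 := by
    intro j h1 hj
    obtain ⟨i, rfl⟩ : ∃ i, j = i + 1 := ⟨j-1, by omega⟩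
    rcases hparam with ⟨ha1, _⟩ | ⟨ha2, _⟩
    · have h2 : a*q < 1 := by
        have := mul_lt_mul_of_pos_right ha1 hq0
        rwa [inv_mul_cancel₀ hq] at this
      have h3 : q^i ≤ 1 := pow_le_one₀ (le_of_lt hq0) (le_of_lt hq1)
      have h4 : (0:ℝ) < q^i := pow_pos hq0 i
      have h5 : a*q^(i+1) < 1 := by rw [pow_succ]; nlinarith
      intro hc; linarith
    · have h5 : (0:ℝ) < q^(n+m) := pow_pos hq0 (n+m)
      have h6 : q^(n+m) ≤ q^(i+1) :=
        pow_le_pow_of_le_one (le_of_lt hq0) (le_of_lt hq1) (by omega)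
      have h7 : (q:ℝ)^(-((n+m:ℕ):ℤ)) = ((q^(n+m):ℝ))⁻¹ := by rw [zpow_neg, zpow_natCast]
      rw [h7] at ha2
      have h9 : 1 < a * q^(i+1) := by
        have h8 : ((q^(n+m):ℝ))⁻¹ * q^(n+m) ≤ ((q^(n+m):ℝ))⁻¹ * q^(i+1) :=
          mul_le_mul_of_nonneg_left h6 (le_of_lt (inv_pos.2 h5))
        rw [inv_mul_cancel₀ (ne_of_gt h5)] at h8
        nlinarith
      intro hc; linarith
  have hmain := mainlem q a b hq0 hq1 ha hb n hA m x (by omega)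
  rw [qHahnQ]
  simp only [Nat.add_sub_cancel_left]
  rw [hmain, GG]
  have hsum : (∑ k ∈ Finset.range (n+1),
      ((qPoch q (q ^ (-(n:ℤ))) k * qPoch q (a*b*q^(n+1)) k * qPoch q (q ^ (-(x:ℤ))) k /
        (qPoch q (a*q) k * qPoch q (q ^ (-((n+m:ℕ):ℤ))) k * qPoch q q k) : ℝ) : ℂ) * (q:ℂ)^k)
      = ((SsumD q a b n (n+m) x : ℝ) : ℂ) := by
    rw [SsumD]
    push_cast
    rfl
  rw [hsum]
  have key : (q:ℝ)^(m*(m+1)/2) * q^(-((n:ℝ)^2)/2 - (n:ℝ)*(m:ℝ) - (m:ℝ)*((m:ℝ)+1)/2)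
      = q^((n:ℝ)^2/2 - (n:ℝ)*((n+m:ℕ):ℝ)) := by
    rw [← Real.rpow_natCast q (m*(m+1)/2), ← Real.rpow_add hq0]
    congr 1
    rw [Nat.cast_div (Nat.even_mul_succ_self m).two_dvd (by norm_num : ((2:ℕ):ℝ) ≠ 0)]
    push_cast
    ring
  have keyC := congrArg (fun r : ℝ => (r : ℂ)) key
  push_cast at keyC
  push_cast
  linear_combination (((qPoch q q (n+m) : ℝ):ℂ) * ((SsumD q a b n (n+m) x : ℝ):ℂ)
    / ((qPoch q q m : ℝ):ℂ)) * keyC
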